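/- Let H be a finite-dimensional complex inner product space, let d_1, …, d_m, g_1, …, g_m ∈ H satisfy the biorthogonality condition ⟨d_k, g_l⟩ = δ_{kl}, and set ĝ_k = g_k/‖g_k‖. Define M_*(ρ) = ∑_{k,l=1}^m ⟨d_l, ρ d_k⟩ ⟨ĝ_k, ·⟩ ĝ_l, i.e. M_*(ρ) = ∑_{k,l} ⟨d_l, ρ d_k⟩ |ĝ_l⟩⟨ĝ_k|. Then for each fixed l, M_*(|ĝ_l⟩⟨ĝ_l|) = ‖g_l‖^{-2} |ĝ_l⟩⟨ĝ_l|; in particular ∑_{k=1}^m ⟨d_k, ĝ_l⟩⟨ĝ_l, d_k⟩ = ‖g_l‖^{-2}, so if the input state is the pure state |ĝ_l⟩⟨ĝ_l|, the outcome occurs with probability ‖g_l‖^{-2} and the conditional output state is again |ĝ_l⟩⟨ĝ_l|. -/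

import Mathlib

/-- The rank-one operator `|u⟩⟨v| : ψ ↦ ⟨v, ψ⟩ u` (inner ℂ product conjugate-linear in the
first argument, linear in the second). -/
noncomputable def rankOne {H : Type*} [NormedAddCommGroup H] [InnerProductSpace ℂ H]
    (u v : H) : H →ₗ[ℂ] H where
  toFun ψ := (inner ℂ v ψ : ℂ) • u
  map_add' x y := by simp [inner_add_right, add_smul]
  map_smul' c x := by simp [inner_smul_right, smul_smul]

lemma rankOne_apply {H : Type*} [NormedAddCommGroup H] [InnerProductSpace ℂ H]
    (u v ψ : H) : rankOne u v ψ = (inner ℂ v ψ : ℂ) • u := rfl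

/-- 'very weak repeatability': for biorthogonal families `d_k, g_l`
(`⟨d_k, g_l⟩ = δ_{kl}`), normalized vectors `ghat_k = g_k/‖g_k‖`, and the instrument
`M_*(ρ) = ∑_{k,l} ⟨d_l, ρ d_k⟩ |ghat_l⟩⟨ghat_k|`, one has, for each `l`,
`M_*(|ghat_l⟩⟨ghat_l|) = ‖g_l‖⁻² |ghat_l⟩⟨ghat_l|` and `∑_k ⟨d_k, ghat_l⟩⟨ghat_l, d_k⟩ = ‖g_l‖⁻²`. -/
theorem stmt_16 {H : Type*} [NormedAddCommGroup H] [InnerProductSpace ℂ H]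
    [FiniteDimensional ℂ H] (m : ℕ) (d g : Fin m → H)
    (hbi : ∀ k l : Fin m, (inner ℂ (d k) (g l) : ℂ) = if k = l then 1 else 0)
    (ghat : Fin m → H) (hghat : ∀ k, ghat k = ‖g k‖⁻¹ • g k)
    (Mstar : (H →ₗ[ℂ] H) → (H →ₗ[ℂ] H))
    (hMstar : ∀ ρ : H →ₗ[ℂ] H, Mstar ρ =
      ∑ k : Fin m, ∑ l : Fin m, (inner ℂ (d l) (ρ (d k)) : ℂ) • rankOne (ghat l) (ghat k)) :
    ∀ l : Fin m,
      Mstar (rankOne (ghat l) (ghat l))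
          = ((‖g l‖ : ℂ) ^ 2)⁻¹ • rankOne (ghat l) (ghat l) ∧
      ∑ k : Fin m, (inner ℂ (d k) (ghat l) : ℂ) * (inner ℂ (ghat l) (d k) : ℂ)
          = ((‖g l‖ : ℂ) ^ 2)⁻¹ := by
  intro l
  -- ⟨d_k, ghat_l⟩ = ‖g_l‖⁻¹ δ_{kl}
  have hdg : ∀ k : Fin m, (inner ℂ (d k) (ghat l) : ℂ)
      = if k = l then (‖g l‖ : ℂ)⁻¹ else 0 := by
    intro k
    rw [hghat, RCLike.real_smul_eq_coe_smul (K := ℂ), inner_smul_right, hbi]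
    by_cases h : k = l <;> simp [h, Complex.ofReal_inv]
  have hgd : ∀ k : Fin m, (inner ℂ (ghat l) (d k) : ℂ)
      = if k = l then (‖g l‖ : ℂ)⁻¹ else 0 := by
    intro k
    rw [← inner_conj_symm, hdg]
    by_cases h : k = l <;> simp [h, ← Complex.ofReal_inv]
  constructor
  · rw [hMstar]
    have key : ∀ k l' : Fin m,
        (inner ℂ (d l') (rankOne (ghat l) (ghat l) (d k)) : ℂ)
        = if k = l ∧ l' = l then ((‖g l‖ : ℂ) ^ 2)⁻¹ else 0 := by
      intro k l'
      rw [rankOne_apply, inner_smul_right, hgd k, hdg l']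
      by_cases h1 : k = l <;> by_cases h2 : l' = l <;>
        simp [h1, h2, pow_two, mul_inv]
    rw [Finset.sum_eq_single l]
    · rw [Finset.sum_eq_single l]
      · rw [key l l]; simp
      · intro b _ hb; rw [key l b]; simp [hb]
      · simp
    · intro b _ hb
      apply Finset.sum_eq_zero
      intro c _
      rw [key b c]
      simp [hb]
    · simp
  · have hgl : g l ≠ 0 := by
      intro h
      have := hbi l l
      simp [h] at this
    rw [Finset.sum_eq_single l]
    · rw [hdg l, hgd l]
      simp [pow_two, mul_inv]
    · intro b _ hb; rw [hdg b]; simp [hb]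
    · simp
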